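/- arXiv:1905.10184 — 3 statements merged into one kernel-verified Lean document; each statement's English description precedes it below -/
import Mathlib

section
/- Let w₀, w₁, w₂, w₃ be real numbers with √(w₁²+w₂²+w₃²) < w₀, and let M = w₀σ₀ + w₁σ₁ + w₂σ₂ + w₃σ₃, a Hermitian 2×2 complex matrix. Then M is positive definite, and tr( M · log M ) = 2·w₀·( log(w₀) + c(|w⃗|/w₀) ), where |w⃗| = √(w₁²+w₂²+w₃²), log M denotes the matrix logarithm of M obtained by applying the real logarithm to the eigenvalues of M in a spectral decomposition (continuous functional calculus for Hermitian matrices), and c(λ) := (1/2)·log(1−λ²) + (λ/2)·log((1+λ)/(1−λ)). -/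
open Matrix
open scoped ComplexOrder

/-- The Pauli matrices `σ₀, σ₁, σ₂, σ₃` as 2×2 complex matrices. -/
noncomputable def pauli : Fin 4 → Matrix (Fin 2) (Fin 2) ℂ :=
  ![!![1, 0; 0, 1], !![0, 1; 1, 0], !![0, -Complex.I; Complex.I, 0], !![1, 0; 0, -1]]

/-- The function `c(λ) := (1/2)·log(1−λ²) + (λ/2)·log((1+λ)/(1−λ))`. -/
noncomputable def cFun (l : ℝ) : ℝ :=
  (1 / 2) * Real.log (1 - l ^ 2) + (l / 2) * Real.log ((1 + l) / (1 - l))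

/-- The logarithm of a Hermitian matrix, obtained by applying the real logarithm to the
eigenvalues in a spectral decomposition `M = U·diag(λᵢ)·U*` (continuous functional
calculus for Hermitian matrices). -/
noncomputable def matrixLog {n : Type*} [Fintype n] [DecidableEq n]
    {M : Matrix n n ℂ} (hM : M.IsHermitian) : Matrix n n ℂ :=
  (hM.eigenvectorUnitary : Matrix n n ℂ) *
    Matrix.diagonal (fun i => (Real.log (hM.eigenvalues i) : ℂ)) *
    star (hM.eigenvectorUnitary : Matrix n n ℂ)

lemma posDef_unitary_conj {n : Type*} [Fintype n] [DecidableEq n]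
    {U : Matrix n n ℂ} (hU : U ∈ Matrix.unitaryGroup n ℂ) {D : Matrix n n ℂ}
    (hD : D.PosDef) : (U * D * star U).PosDef := by
  have h2 : U * star U = 1 := (Matrix.mem_unitaryGroup_iff).mp hU
  rw [Matrix.posDef_iff_dotProduct_mulVec]
  constructor
  · have hDh : Dᴴ = D := hD.1
    show (U * D * star U)ᴴ = _
    simp [Matrix.conjTranspose_mul, hDh, Matrix.mul_assoc, Matrix.star_eq_conjTranspose]
  · intro x hx
    have hy : star U *ᵥ x ≠ 0 := by
      intro h0
      apply hx
      have : U *ᵥ (star U *ᵥ x) = x := by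
        rw [Matrix.mulVec_mulVec, h2, Matrix.one_mulVec]
      rw [← this, h0, Matrix.mulVec_zero]
    have key := hD.dotProduct_mulVec_pos hy
    have e : star x ⬝ᵥ (U * D * star U) *ᵥ x
        = star (star U *ᵥ x) ⬝ᵥ D *ᵥ (star U *ᵥ x) := by
      simp [Matrix.star_mulVec, Matrix.dotProduct_mulVec, Matrix.vecMul_vecMul,
        Matrix.star_eq_conjTranspose, Matrix.mul_assoc]
    rw [e]; exact key

lemma keyEq (w₀ r : ℝ) (h0 : 0 ≤ r) (h : r < w₀) :
    (w₀+r)*Real.log (w₀+r) + (w₀-r)*Real.log (w₀-r)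
      = 2*w₀*(Real.log w₀ + cFun (r/w₀)) := by
  have hw : 0 < w₀ := lt_of_le_of_lt h0 h
  have ha : 0 < w₀ + r := by linarith
  have hb : 0 < w₀ - r := by linarith
  have e1 : 1 - (r/w₀)^2 = ((w₀+r)*(w₀-r))/(w₀^2) := by field_simp; ring
  have e2 : (1 + r/w₀) / (1 - r/w₀) = (w₀+r)/(w₀-r) := by
    have hc : 0 < 1 - r/w₀ := by
      rw [sub_pos]; exact (div_lt_one hw).mpr h
    rw [div_eq_div_iff hc.ne' hb.ne']
    field_simp
    try ring
  rw [cFun, e1, e2, Real.log_div (by positivity) (by positivity),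
    Real.log_mul ha.ne' hb.ne', Real.log_div ha.ne' hb.ne', Real.log_pow]
  field_simp
  ring

/-- Let `w₀, w₁, w₂, w₃` be real with `√(w₁²+w₂²+w₃²) < w₀`, and let
`M = w₀σ₀ + w₁σ₁ + w₂σ₂ + w₃σ₃` (a Hermitian matrix).  Then `M` is positive definite
and `tr(M·log M) = 2·w₀·(log(w₀) + c(|w⃗|/w₀))` with `|w⃗| = √(w₁²+w₂²+w₃²)`. -/
theorem trace_mul_log_pauli_combination (w₀ w₁ w₂ w₃ : ℝ)
    (h : Real.sqrt (w₁ ^ 2 + w₂ ^ 2 + w₃ ^ 2) < w₀)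
    (M : Matrix (Fin 2) (Fin 2) ℂ)
    (hMdef : M = (w₀ : ℂ) • pauli 0 + (w₁ : ℂ) • pauli 1 + (w₂ : ℂ) • pauli 2
        + (w₃ : ℂ) • pauli 3)
    (hM : M.IsHermitian) :
    M.PosDef ∧
    (M * matrixLog hM).trace =
      ((2 * w₀ * (Real.log w₀ + cFun (Real.sqrt (w₁ ^ 2 + w₂ ^ 2 + w₃ ^ 2) / w₀)) : ℝ) : ℂ) := by
  set r : ℝ := Real.sqrt (w₁ ^ 2 + w₂ ^ 2 + w₃ ^ 2) with hr
  have hr0 : 0 ≤ r := Real.sqrt_nonneg _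
  have hw : 0 < w₀ := lt_of_le_of_lt hr0 h
  have hr2 : r ^ 2 = w₁ ^ 2 + w₂ ^ 2 + w₃ ^ 2 := Real.sq_sqrt (by positivity)
  set ev : Fin 2 → ℝ := hM.eigenvalues with hev
  set U : Matrix (Fin 2) (Fin 2) ℂ := (hM.eigenvectorUnitary : Matrix (Fin 2) (Fin 2) ℂ)
    with hU
  have h1 : star U * U = 1 := (Matrix.mem_unitaryGroup_iff').mp (hM.eigenvectorUnitary).2
  -- trace and determinant of M
  have htr : M.trace = ((2*w₀ : ℝ) : ℂ) := by
    rw [hMdef]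
    simp [Matrix.trace_fin_two, pauli]
    push_cast
    ring
  have hdet : M.det = ((w₀^2 - (w₁^2+w₂^2+w₃^2) : ℝ) : ℂ) := by
    rw [hMdef]
    simp [Matrix.det_fin_two, pauli]
    push_cast
    ring_nf
    rw [Complex.I_sq]
    ring
  -- eigenvalue sum and product
  have htrev : M.trace = ((ev 0 + ev 1 : ℝ) : ℂ) := by
    conv_lhs => rw [hM.spectral_theorem, Unitary.conjStarAlgAut_apply]
    rw [Matrix.trace_mul_cycle, h1, Matrix.one_mul, Matrix.trace_diagonal, Fin.sum_univ_two]
    push_cast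
    simp
    rfl
  have hdetev : M.det = ((ev 0 * ev 1 : ℝ) : ℂ) := by
    rw [hM.det_eq_prod_eigenvalues, Fin.prod_univ_two]
    push_cast
    simp
    rfl
  have hsum : ev 0 + ev 1 = 2*w₀ := by
    have := htrev.symm.trans htr
    exact_mod_cast this
  have hprod : ev 0 * ev 1 = w₀^2 - r^2 := by
    have := hdetev.symm.trans hdet
    rw [hr2]
    exact_mod_cast this
  -- eigenvalues are w₀ ± r
  have hchar : (ev 0 - (w₀ + r)) * (ev 0 - (w₀ - r)) = 0 := by
    linear_combination ev 0 * hsum - hprod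
  have hcases : (ev 0 = w₀ + r ∧ ev 1 = w₀ - r) ∨ (ev 0 = w₀ - r ∧ ev 1 = w₀ + r) := by
    rcases mul_eq_zero.mp hchar with h' | h'
    · left; constructor <;> [skip; skip] <;> linarith [sub_eq_zero.mp h']
    · right; constructor <;> linarith [sub_eq_zero.mp h']
  have hev0 : 0 < ev 0 := by rcases hcases with ⟨h0, _⟩ | ⟨h0, _⟩ <;> rw [h0] <;> linarith
  have hev1 : 0 < ev 1 := by rcases hcases with ⟨_, h0⟩ | ⟨_, h0⟩ <;> rw [h0] <;> linarith
  have hevpos : ∀ i, 0 < ev i := by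
    intro i; fin_cases i; exacts [hev0, hev1]
  -- positive definiteness
  have hPD : M.PosDef := by
    have hD : (Matrix.diagonal (RCLike.ofReal ∘ ev) : Matrix (Fin 2) (Fin 2) ℂ).PosDef := by
      apply Matrix.PosDef.diagonal
      intro i
      simpa using Complex.zero_lt_real.mpr (hevpos i)
    have := posDef_unitary_conj (hM.eigenvectorUnitary).2 hD
    convert this using 1
    exact hM.spectral_theorem
  refine ⟨hPD, ?_⟩
  -- trace of M * log M
  have hmul : M * matrixLog hM
      = U * Matrix.diagonal (fun i => ((ev i : ℂ)) * (Real.log (ev i) : ℂ)) * star U := by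
    have e0 : M * matrixLog hM
        = (U * Matrix.diagonal (RCLike.ofReal ∘ ev) * star U) * matrixLog hM :=
      congrArg (· * matrixLog hM) hM.spectral_theorem
    rw [e0, matrixLog]
    simp only [← Matrix.mul_assoc, ← hU, ← hev]
    rw [Matrix.mul_assoc (U * Matrix.diagonal (RCLike.ofReal ∘ ev)) (star U) U, h1,
      Matrix.mul_one, Matrix.mul_assoc U _ _, Matrix.diagonal_mul_diagonal]
    rfl
  have htrace : (M * matrixLog hM).trace
      = ((ev 0 * Real.log (ev 0) + ev 1 * Real.log (ev 1) : ℝ) : ℂ) := by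
    rw [hmul, Matrix.trace_mul_cycle, h1, Matrix.one_mul, Matrix.trace_diagonal,
      Fin.sum_univ_two]
    push_cast
    ring
  rw [htrace]
  congr 1
  have hkey := keyEq w₀ r hr0 h
  rcases hcases with ⟨h0, h1'⟩ | ⟨h0, h1'⟩ <;> rw [h0, h1'] <;> linarith [hkey]
end

section
/- Let q₀ ∈ ℝ and q⃗ = (q₁,q₂,q₃) ∈ ℝ³ with Q := √(q₁²+q₂²+q₃²) > 0. Define w₀ := cosh(Q)·e^{−q₀} and w_s := −q_s·(sinh(Q)/Q)·e^{−q₀} for s = 1,2,3, and set |w⃗| := √(w₁²+w₂²+w₃²). Then 0 < |w⃗| < w₀, and with λ := |w⃗|/w₀ the following Lagrange-multiplier equations hold: (i) log(w₀) + c(λ) − λ·c′(λ) + q₀ = 0; (ii) (w_s/|w⃗|)·c′(λ) + q_s = 0 for s = 1,2,3. Moreover, (w₀, w₁, w₂, w₃) is the unique quadruple of real numbers with w₀ > 0 and 0 < √(w₁²+w₂²+w₃²) < w₀ satisfying (i) and (ii). -/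
/-- The derivative `c′(λ) = (1/2)·log((1+λ)/(1−λ)) = artanh λ` of `cFun`. -/
noncomputable def cDer (l : ℝ) : ℝ := (1 / 2) * Real.log ((1 + l) / (1 - l))


lemma cFun_sub (l : ℝ) : cFun l - l * cDer l = (1 / 2) * Real.log (1 - l ^ 2) := by
  unfold cFun cDer; ring

lemma cDer_tanh (x : ℝ) : cDer (Real.tanh x) = x := by
  have hc := Real.cosh_pos x
  unfold cDer
  rw [Real.tanh_eq_sinh_div_cosh]
  have h1 : (1 + Real.sinh x / Real.cosh x) / (1 - Real.sinh x / Real.cosh x)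
      = Real.exp x / Real.exp (-x) := by
    rw [← Real.cosh_add_sinh, ← Real.cosh_sub_sinh]
    field_simp
  rw [h1, ← Real.exp_sub, Real.log_exp]; ring

lemma log_one_sub_tanh_sq (x : ℝ) :
    Real.log (1 - Real.tanh x ^ 2) = -(2 * Real.log (Real.cosh x)) := by
  have hc := Real.cosh_pos x
  have h : 1 - Real.tanh x ^ 2 = (Real.cosh x ^ 2)⁻¹ := by
    rw [Real.tanh_eq_sinh_div_cosh]
    field_simp
    linarith [Real.cosh_sq x]
  rw [h, Real.log_inv, Real.log_pow]
  norm_num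

lemma eq_tanh_of_cDer (l x : ℝ) (hl0 : -1 < l) (hl1 : l < 1) (h : cDer l = x) :
    l = Real.tanh x := by
  have h1 : (0:ℝ) < 1 + l := by linarith
  have h2 : (0:ℝ) < 1 - l := by linarith
  have hpos : 0 < (1 + l) / (1 - l) := div_pos h1 h2
  have hE : (1 + l) / (1 - l) = Real.exp (2 * x) := by
    rw [← Real.exp_log hpos]
    congr 1
    unfold cDer at h; linarith
  have he : 1 + l = Real.exp (2 * x) * (1 - l) := by
    field_simp at hE; linarith
  have hc := Real.cosh_pos x
  have he2 : 1 + Real.tanh x = Real.exp (2 * x) * (1 - Real.tanh x) := by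
    rw [Real.tanh_eq_sinh_div_cosh]
    field_simp
    rw [Real.cosh_add_sinh, Real.cosh_sub_sinh, ← Real.exp_add]
    congr 1
    ring
  have hEpos := Real.exp_pos (2 * x)
  have : l * (Real.exp (2 * x) + 1) = Real.tanh x * (Real.exp (2 * x) + 1) := by
    nlinarith
  exact mul_right_cancel₀ (by positivity) this

/-- Let `q₀ ∈ ℝ`, `q⃗ ∈ ℝ³` with `Q = √(q₁²+q₂²+q₃²) > 0`, and set
`w₀ = cosh(Q)e^{−q₀}`, `w_s = −q_s·(sinh(Q)/Q)·e^{−q₀}`, `|w⃗| = √(w₁²+w₂²+w₃²)`.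
Then `0 < |w⃗| < w₀` and, with `λ = |w⃗|/w₀`, the Lagrange-multiplier equations hold:
(i) `log(w₀) + c(λ) − λ·c′(λ) + q₀ = 0`;
(ii) `(w_s/|w⃗|)·c′(λ) + q_s = 0` for `s = 1,2,3`;
moreover `(w₀, w⃗)` is the unique such quadruple with `w₀ > 0` and
`0 < √(w₁²+w₂²+w₃²) < w₀` satisfying (i) and (ii). -/
theorem lagrange_multiplier_equations (q₀ : ℝ) (q : Fin 3 → ℝ)
    (Q : ℝ) (hQdef : Q = Real.sqrt (∑ s, q s ^ 2)) (hQpos : 0 < Q)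
    (w₀ : ℝ) (hw₀ : w₀ = Real.cosh Q * Real.exp (-q₀))
    (w : Fin 3 → ℝ) (hw : ∀ s, w s = -(q s) * (Real.sinh Q / Q) * Real.exp (-q₀))
    (wn : ℝ) (hwn : wn = Real.sqrt (∑ s, w s ^ 2)) :
    0 < wn ∧ wn < w₀ ∧
    (Real.log w₀ + cFun (wn / w₀) - (wn / w₀) * cDer (wn / w₀) + q₀ = 0) ∧
    (∀ s : Fin 3, (w s / wn) * cDer (wn / w₀) + q s = 0) ∧
    (∀ (v₀ : ℝ) (v : Fin 3 → ℝ), 0 < v₀ →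
      0 < Real.sqrt (∑ s, v s ^ 2) → Real.sqrt (∑ s, v s ^ 2) < v₀ →
      (Real.log v₀ + cFun (Real.sqrt (∑ s, v s ^ 2) / v₀)
        - (Real.sqrt (∑ s, v s ^ 2) / v₀) * cDer (Real.sqrt (∑ s, v s ^ 2) / v₀) + q₀ = 0) →
      (∀ s : Fin 3, (v s / Real.sqrt (∑ s, v s ^ 2))
        * cDer (Real.sqrt (∑ s, v s ^ 2) / v₀) + q s = 0) →
      v₀ = w₀ ∧ v = w) := by
  have hS : 0 < Real.sinh Q := Real.sinh_pos_iff.mpr hQpos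
  have hC := Real.cosh_pos Q
  have hE := Real.exp_pos (-q₀)
  have hq2 : ∑ s, q s ^ 2 = Q ^ 2 := by
    rw [hQdef, Real.sq_sqrt (by positivity)]
  have hwn' : wn = Real.sinh Q * Real.exp (-q₀) := by
    have hsum : ∑ s, w s ^ 2 = (Real.sinh Q * Real.exp (-q₀)) ^ 2 := by
      simp only [hw, Fin.sum_univ_three] at *
      have hQ0 : Q ≠ 0 := ne_of_gt hQpos
      field_simp
      nlinarith [hq2]
    rw [hwn, hsum, Real.sqrt_sq (by positivity)]
  have hwnpos : 0 < wn := by rw [hwn']; positivity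
  have hSC : Real.sinh Q < Real.cosh Q := by
    nlinarith [Real.cosh_sub_sinh Q, Real.exp_pos (-Q)]
  have hwlt : wn < w₀ := by
    rw [hwn', hw₀]; nlinarith
  have hlam : wn / w₀ = Real.tanh Q := by
    rw [hwn', hw₀, Real.tanh_eq_sinh_div_cosh]
    field_simp
  have hlogw₀ : Real.log w₀ = Real.log (Real.cosh Q) - q₀ := by
    rw [hw₀, Real.log_mul (ne_of_gt hC) (ne_of_gt hE), Real.log_exp]; ring
  refine ⟨hwnpos, hwlt, ?_, ?_, ?_⟩
  · rw [hlam]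
    have h1 := cFun_sub (Real.tanh Q)
    have h2 := cDer_tanh Q
    have h3 := log_one_sub_tanh_sq Q
    rw [hlogw₀]; linarith
  · intro s
    rw [hlam, cDer_tanh, hw s, hwn']
    have hQ0 : Q ≠ 0 := ne_of_gt hQpos
    field_simp
    ring
  · intro v₀ v hv₀ hL hLv hi hii
    set L := Real.sqrt (∑ s, v s ^ 2) with hLdef
    have hL2 : ∑ s, v s ^ 2 = L ^ 2 := by
      rw [hLdef, Real.sq_sqrt (by positivity)]
    set l := L / v₀ with hl
    have hl0 : 0 < l := div_pos hL hv₀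
    have hl1 : l < 1 := (div_lt_one hv₀).mpr hLv
    set μ := cDer l with hμ
    have hμpos : 0 < μ := by
      rw [hμ]
      unfold cDer
      have : 1 < (1 + l) / (1 - l) := by
        rw [one_lt_div (by linarith)]; linarith
      have := Real.log_pos this
      linarith
    have hvs : ∀ s, v s * μ = -(q s) * L := by
      intro s
      have := hii s
      have hL0 : L ≠ 0 := ne_of_gt hL
      field_simp at this ⊢
      linarith
    have hμQ : μ = Q := by
      have hsum : (∑ s, v s ^ 2) * μ ^ 2 = (∑ s, q s ^ 2) * L ^ 2 := by
        simp only [Fin.sum_univ_three]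
        have h0 := hvs 0; have h1 := hvs 1; have h2 := hvs 2
        linear_combination (v 0 * μ - q 0 * L) * h0 + (v 1 * μ - q 1 * L) * h1
          + (v 2 * μ - q 2 * L) * h2
      rw [hL2, hq2] at hsum
      have hμsq : μ ^ 2 = Q ^ 2 := by
        have hL2' : (L : ℝ) ^ 2 ≠ 0 := by positivity
        apply mul_right_cancel₀ hL2'
        linear_combination hsum
      nlinarith [hμsq, hμpos, hQpos]
    have hltanh : l = Real.tanh Q := eq_tanh_of_cDer l Q (by linarith) hl1 (hμ ▸ hμQ)
    have hμ' : μ = cDer (Real.tanh Q) := by rw [hμ, hltanh]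
    have hlogv₀ : Real.log v₀ = Real.log (Real.cosh Q) - q₀ := by
      have h1 := cFun_sub (Real.tanh Q)
      have h3 := log_one_sub_tanh_sq Q
      have h2 := cDer_tanh Q
      rw [hltanh, hμ'] at hi
      rw [h2] at hi h1
      linarith
    have hv₀w : v₀ = w₀ := by
      rw [← Real.exp_log hv₀, hlogv₀, ← hlogw₀, Real.exp_log (by rw [hw₀]; positivity)]
    refine ⟨hv₀w, ?_⟩
    have hLwn : L = wn := by
      have : L = l * v₀ := by rw [hl]; field_simp
      rw [this, hltanh, hv₀w, hw₀, hwn', Real.tanh_eq_sinh_div_cosh]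
      field_simp
    funext s
    have h1 := hvs s
    rw [hμQ, hLwn, hwn'] at h1
    rw [hw s]
    have hQ0 : Q ≠ 0 := ne_of_gt hQpos
    field_simp at h1 ⊢
    linarith
end

section
/- Let m > 0, θ > 0 be real constants, let n₀ ≠ 0 and n_s ∈ ℝ (s = 0,1,2,3), let u₀, u_s ∈ ℝ², and set J_s := n_s·u_s ∈ ℝ². Define w_s^{eq}(p) = (n_s/(2πmθ))·[1 + (u_s − u₀)·(p − u₀)/(mθ)]·exp(−|p − u₀|²/(2mθ)). Then for every s = 0,1,2,3 and every i,k ∈ {1,2}: ∫_{ℝ²} p^i p^k w_s^{eq}(p) dp = n_s·( mθ·δ_{ik} − J₀^i J₀^k / n₀² ) + ( J₀^i J_s^k + J_s^i J₀^k ) / n₀, where δ_{ik} is the Kronecker delta and superscripts denote vector components. -/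
open MeasureTheory Real RealInnerProductSpace

lemma gauss_int_pow {b : ℝ} (hb : 0 < b) (n : ℕ) :
    Integrable fun x : ℝ => x ^ n * Real.exp (-b * x ^ 2) := by
  have h : (-1 : ℝ) < n := lt_of_lt_of_le neg_one_lt_zero (Nat.cast_nonneg n)
  simpa [Real.rpow_natCast] using integrable_rpow_mul_exp_neg_mul_sq hb h

lemma gauss1 {b : ℝ} (hb : 0 < b) : ∫ x : ℝ, x * Real.exp (-b * x ^ 2) = 0 := by
  refine integral_eq_zero_of_hasDerivAt_of_integrable
    (f := fun x => -(2 * b)⁻¹ * Real.exp (-b * x ^ 2)) (fun x => ?_) ?_ ?_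
  · have := (((hasDerivAt_pow 2 x).const_mul (-b)).exp).const_mul (-(2 * b)⁻¹)
    refine this.congr_deriv ?_
    field_simp
    ring
  · simpa using gauss_int_pow hb 1
  · exact (integrable_exp_neg_mul_sq hb).const_mul _

lemma gauss2 {b : ℝ} (hb : 0 < b) :
    ∫ x : ℝ, x ^ 2 * Real.exp (-b * x ^ 2) = (2 * b)⁻¹ * Real.sqrt (π / b) := by
  have h0 : ∫ x : ℝ, (x ^ 2 * Real.exp (-b * x ^ 2) - (2 * b)⁻¹ * Real.exp (-b * x ^ 2)) = 0 := by
    refine integral_eq_zero_of_hasDerivAt_of_integrable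
      (f := fun x => -(2 * b)⁻¹ * x * Real.exp (-b * x ^ 2)) (fun x => ?_) ?_ ?_
    · have h1 : HasDerivAt (fun x : ℝ => Real.exp (-b * x ^ 2))
        (Real.exp (-b * x ^ 2) * (-b * (2 * x ^ 1))) x :=
        ((hasDerivAt_pow 2 x).const_mul (-b)).exp
      have := (((hasDerivAt_id' x).const_mul (-(2 * b)⁻¹)).mul h1)
      refine this.congr_deriv ?_
      field_simp
      ring
    · exact ((gauss_int_pow hb 2).sub ((integrable_exp_neg_mul_sq hb).const_mul _))
    · have := (gauss_int_pow hb 1).const_mul (-(2 * b)⁻¹)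
      simpa [mul_assoc, mul_comm, mul_left_comm] using this
  have h1 := integral_sub (gauss_int_pow hb 2)
    ((integrable_exp_neg_mul_sq hb).const_mul ((2 * b)⁻¹))
  simp only [h0] at h1
  have h2 : ∫ x : ℝ, (2 * b)⁻¹ * Real.exp (-b * x ^ 2) = (2 * b)⁻¹ * Real.sqrt (π / b) := by
    rw [MeasureTheory.integral_const_mul, integral_gaussian]
  linarith [h1.symm, h2]

lemma gauss3 {b : ℝ} (hb : 0 < b) : ∫ x : ℝ, x ^ 3 * Real.exp (-b * x ^ 2) = 0 := by
  have i1 : Integrable fun x : ℝ => b⁻¹ * (x ^ 1 * Real.exp (-b * x ^ 2)) :=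
    (gauss_int_pow hb 1).const_mul b⁻¹
  have h0 : ∫ x : ℝ, (x ^ 3 * Real.exp (-b * x ^ 2) - b⁻¹ * (x ^ 1 * Real.exp (-b * x ^ 2))) = 0 := by
    refine integral_eq_zero_of_hasDerivAt_of_integrable
      (f := fun x => -(2 * b)⁻¹ * x ^ 2 * Real.exp (-b * x ^ 2)) (fun x => ?_) ?_ ?_
    · have h1 : HasDerivAt (fun x : ℝ => Real.exp (-b * x ^ 2))
        (Real.exp (-b * x ^ 2) * (-b * (2 * x ^ 1))) x :=
        ((hasDerivAt_pow 2 x).const_mul (-b)).exp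
      have h2 : HasDerivAt (fun x : ℝ => -(2 * b)⁻¹ * x ^ 2) (-(2 * b)⁻¹ * (2 * x ^ 1)) x :=
        (hasDerivAt_pow 2 x).const_mul (-(2 * b)⁻¹)
      have := h2.mul h1
      refine this.congr_deriv ?_
      field_simp
      ring
    · exact (gauss_int_pow hb 3).sub i1
    · show Integrable fun x : ℝ => -(2 * b)⁻¹ * x ^ 2 * Real.exp (-b * x ^ 2)
      have := (gauss_int_pow hb 2).const_mul (-(2 * b)⁻¹)
      simpa [mul_assoc] using this
  have h1 := integral_sub (gauss_int_pow hb 3) i1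
  simp only [h0] at h1
  have h2 : ∫ x : ℝ, b⁻¹ * (x ^ 1 * Real.exp (-b * x ^ 2)) = 0 := by
    rw [MeasureTheory.integral_const_mul]
    simp only [pow_one]
    rw [gauss1 hb, mul_zero]
  rw [h2] at h1
  linarith [h1.symm]

lemma gauss_poly_integrable {b : ℝ} (hb : 0 < b) (c0 c1 c2 c3 : ℝ) :
    Integrable fun x : ℝ => (c0 + c1 * x + c2 * x ^ 2 + c3 * x ^ 3) * Real.exp (-b * x ^ 2) := by
  have h : (fun x : ℝ => (c0 + c1 * x + c2 * x ^ 2 + c3 * x ^ 3) * Real.exp (-b * x ^ 2))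
      = fun x : ℝ => c0 * (x ^ 0 * Real.exp (-b * x ^ 2)) + (c1 * (x ^ 1 * Real.exp (-b * x ^ 2))
        + (c2 * (x ^ 2 * Real.exp (-b * x ^ 2)) + c3 * (x ^ 3 * Real.exp (-b * x ^ 2)))) := by
    funext x; ring
  rw [h]
  exact ((gauss_int_pow hb 0).const_mul c0).add (((gauss_int_pow hb 1).const_mul c1).add
    (((gauss_int_pow hb 2).const_mul c2).add ((gauss_int_pow hb 3).const_mul c3)))

lemma gauss_poly {b : ℝ} (hb : 0 < b) (c0 c1 c2 c3 : ℝ) :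
    ∫ x : ℝ, (c0 + c1 * x + c2 * x ^ 2 + c3 * x ^ 3) * Real.exp (-b * x ^ 2)
      = (c0 + c2 * (2 * b)⁻¹) * Real.sqrt (π / b) := by
  have e0 : Integrable fun x : ℝ => c0 * (x ^ 0 * Real.exp (-b * x ^ 2)) :=
    (gauss_int_pow hb 0).const_mul c0
  have e1 : Integrable fun x : ℝ => c1 * (x ^ 1 * Real.exp (-b * x ^ 2)) :=
    (gauss_int_pow hb 1).const_mul c1
  have e2 : Integrable fun x : ℝ => c2 * (x ^ 2 * Real.exp (-b * x ^ 2)) :=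
    (gauss_int_pow hb 2).const_mul c2
  have e3 : Integrable fun x : ℝ => c3 * (x ^ 3 * Real.exp (-b * x ^ 2)) :=
    (gauss_int_pow hb 3).const_mul c3
  have e23 : Integrable fun x : ℝ => c2 * (x ^ 2 * Real.exp (-b * x ^ 2))
      + c3 * (x ^ 3 * Real.exp (-b * x ^ 2)) := e2.add e3
  have e123 : Integrable fun x : ℝ => c1 * (x ^ 1 * Real.exp (-b * x ^ 2))
      + (c2 * (x ^ 2 * Real.exp (-b * x ^ 2)) + c3 * (x ^ 3 * Real.exp (-b * x ^ 2))) :=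
    e1.add e23
  have h : (fun x : ℝ => (c0 + c1 * x + c2 * x ^ 2 + c3 * x ^ 3) * Real.exp (-b * x ^ 2))
      = fun x : ℝ => c0 * (x ^ 0 * Real.exp (-b * x ^ 2)) + (c1 * (x ^ 1 * Real.exp (-b * x ^ 2))
        + (c2 * (x ^ 2 * Real.exp (-b * x ^ 2)) + c3 * (x ^ 3 * Real.exp (-b * x ^ 2)))) := by
    funext x; ring
  rw [h, integral_add e0 e123, integral_add e1 e23, integral_add e2 e3]
  simp only [MeasureTheory.integral_const_mul, pow_zero, pow_one, one_mul]
  rw [integral_gaussian, gauss1 hb, gauss2 hb, gauss3 hb]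
  ring

lemma key_offdiag {b : ℝ} (hb : 0 < b) (v1 v2 A B0 B1 : ℝ) :
    ∫ z : ℝ × ℝ, (z.1 + v1) * (z.2 + v2) * (A + B0 * z.1 + B1 * z.2) *
        (Real.exp (-b * z.1 ^ 2) * Real.exp (-b * z.2 ^ 2))
      = (π / b) * (A * v1 * v2 + (B0 * v2 + B1 * v1) * (2 * b)⁻¹) := by
  have s2 : Real.sqrt (π / b) * Real.sqrt (π / b) = π / b :=
    Real.mul_self_sqrt (by positivity)
  have h : (fun z : ℝ × ℝ => (z.1 + v1) * (z.2 + v2) * (A + B0 * z.1 + B1 * z.2) *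
        (Real.exp (-b * z.1 ^ 2) * Real.exp (-b * z.2 ^ 2)))
      = fun z : ℝ × ℝ =>
        ((A * v1 + A * z.1 + 0 * z.1 ^ 2 + 0 * z.1 ^ 3) * Real.exp (-b * z.1 ^ 2)) *
          ((v2 + 1 * z.2 + 0 * z.2 ^ 2 + 0 * z.2 ^ 3) * Real.exp (-b * z.2 ^ 2))
        + (((0 + B0 * v1 * z.1 + B0 * z.1 ^ 2 + 0 * z.1 ^ 3) * Real.exp (-b * z.1 ^ 2)) *
            ((v2 + 1 * z.2 + 0 * z.2 ^ 2 + 0 * z.2 ^ 3) * Real.exp (-b * z.2 ^ 2))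
          + ((v1 + 1 * z.1 + 0 * z.1 ^ 2 + 0 * z.1 ^ 3) * Real.exp (-b * z.1 ^ 2)) *
            ((0 + B1 * v2 * z.2 + B1 * z.2 ^ 2 + 0 * z.2 ^ 3) * Real.exp (-b * z.2 ^ 2))) := by
    funext z; ring
  rw [h, MeasureTheory.Measure.volume_eq_prod]
  have I1 : Integrable (fun z : ℝ × ℝ =>
      ((A * v1 + A * z.1 + 0 * z.1 ^ 2 + 0 * z.1 ^ 3) * Real.exp (-b * z.1 ^ 2)) *
        ((v2 + 1 * z.2 + 0 * z.2 ^ 2 + 0 * z.2 ^ 3) * Real.exp (-b * z.2 ^ 2)))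
      ((volume : Measure ℝ).prod volume) :=
    (gauss_poly_integrable hb _ _ _ _).mul_prod (gauss_poly_integrable hb _ _ _ _)
  have I2 : Integrable (fun z : ℝ × ℝ =>
      ((0 + B0 * v1 * z.1 + B0 * z.1 ^ 2 + 0 * z.1 ^ 3) * Real.exp (-b * z.1 ^ 2)) *
        ((v2 + 1 * z.2 + 0 * z.2 ^ 2 + 0 * z.2 ^ 3) * Real.exp (-b * z.2 ^ 2)))
      ((volume : Measure ℝ).prod volume) :=
    (gauss_poly_integrable hb _ _ _ _).mul_prod (gauss_poly_integrable hb _ _ _ _)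
  have I3 : Integrable (fun z : ℝ × ℝ =>
      ((v1 + 1 * z.1 + 0 * z.1 ^ 2 + 0 * z.1 ^ 3) * Real.exp (-b * z.1 ^ 2)) *
        ((0 + B1 * v2 * z.2 + B1 * z.2 ^ 2 + 0 * z.2 ^ 3) * Real.exp (-b * z.2 ^ 2)))
      ((volume : Measure ℝ).prod volume) :=
    (gauss_poly_integrable hb _ _ _ _).mul_prod (gauss_poly_integrable hb _ _ _ _)
  have I23 : Integrable (fun z : ℝ × ℝ =>
      ((0 + B0 * v1 * z.1 + B0 * z.1 ^ 2 + 0 * z.1 ^ 3) * Real.exp (-b * z.1 ^ 2)) *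
        ((v2 + 1 * z.2 + 0 * z.2 ^ 2 + 0 * z.2 ^ 3) * Real.exp (-b * z.2 ^ 2))
      + ((v1 + 1 * z.1 + 0 * z.1 ^ 2 + 0 * z.1 ^ 3) * Real.exp (-b * z.1 ^ 2)) *
        ((0 + B1 * v2 * z.2 + B1 * z.2 ^ 2 + 0 * z.2 ^ 3) * Real.exp (-b * z.2 ^ 2)))
      ((volume : Measure ℝ).prod volume) := I2.add I3
  have J1 := integral_prod_mul (μ := (volume : Measure ℝ)) (ν := (volume : Measure ℝ))
    (f := fun x : ℝ => (A * v1 + A * x + 0 * x ^ 2 + 0 * x ^ 3) * Real.exp (-b * x ^ 2))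
    (g := fun y : ℝ => (v2 + 1 * y + 0 * y ^ 2 + 0 * y ^ 3) * Real.exp (-b * y ^ 2))
  have J2 := integral_prod_mul (μ := (volume : Measure ℝ)) (ν := (volume : Measure ℝ))
    (f := fun x : ℝ => (0 + B0 * v1 * x + B0 * x ^ 2 + 0 * x ^ 3) * Real.exp (-b * x ^ 2))
    (g := fun y : ℝ => (v2 + 1 * y + 0 * y ^ 2 + 0 * y ^ 3) * Real.exp (-b * y ^ 2))
  have J3 := integral_prod_mul (μ := (volume : Measure ℝ)) (ν := (volume : Measure ℝ))
    (f := fun x : ℝ => (v1 + 1 * x + 0 * x ^ 2 + 0 * x ^ 3) * Real.exp (-b * x ^ 2))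
    (g := fun y : ℝ => (0 + B1 * v2 * y + B1 * y ^ 2 + 0 * y ^ 3) * Real.exp (-b * y ^ 2))
  rw [integral_add I1 I23, integral_add I2 I3, J1, J2, J3,
    gauss_poly hb, gauss_poly hb, gauss_poly hb, gauss_poly hb, gauss_poly hb]
  linear_combination (A * v1 * v2 + B0 * v2 * (2 * b)⁻¹ + v1 * B1 * (2 * b)⁻¹) * s2

lemma key_diag1 {b : ℝ} (hb : 0 < b) (v A B0 B1 : ℝ) :
    ∫ z : ℝ × ℝ, (z.1 + v) * (z.1 + v) * (A + B0 * z.1 + B1 * z.2) *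
        (Real.exp (-b * z.1 ^ 2) * Real.exp (-b * z.2 ^ 2))
      = (π / b) * (A * v ^ 2 + (A + 2 * B0 * v) * (2 * b)⁻¹) := by
  have s2 : Real.sqrt (π / b) * Real.sqrt (π / b) = π / b :=
    Real.mul_self_sqrt (by positivity)
  have h : (fun z : ℝ × ℝ => (z.1 + v) * (z.1 + v) * (A + B0 * z.1 + B1 * z.2) *
        (Real.exp (-b * z.1 ^ 2) * Real.exp (-b * z.2 ^ 2)))
      = fun z : ℝ × ℝ =>
        ((A * v ^ 2 + (2 * A * v + B0 * v ^ 2) * z.1 + (A + 2 * B0 * v) * z.1 ^ 2 + B0 * z.1 ^ 3) *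
            Real.exp (-b * z.1 ^ 2)) *
          ((1 + 0 * z.2 + 0 * z.2 ^ 2 + 0 * z.2 ^ 3) * Real.exp (-b * z.2 ^ 2))
        + ((v ^ 2 + 2 * v * z.1 + 1 * z.1 ^ 2 + 0 * z.1 ^ 3) * Real.exp (-b * z.1 ^ 2)) *
          ((0 + B1 * z.2 + 0 * z.2 ^ 2 + 0 * z.2 ^ 3) * Real.exp (-b * z.2 ^ 2)) := by
    funext z; ring
  rw [h, MeasureTheory.Measure.volume_eq_prod]
  have I1 : Integrable (fun z : ℝ × ℝ =>
      ((A * v ^ 2 + (2 * A * v + B0 * v ^ 2) * z.1 + (A + 2 * B0 * v) * z.1 ^ 2 + B0 * z.1 ^ 3) *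
          Real.exp (-b * z.1 ^ 2)) *
        ((1 + 0 * z.2 + 0 * z.2 ^ 2 + 0 * z.2 ^ 3) * Real.exp (-b * z.2 ^ 2)))
      ((volume : Measure ℝ).prod volume) :=
    (gauss_poly_integrable hb _ _ _ _).mul_prod (gauss_poly_integrable hb _ _ _ _)
  have I2 : Integrable (fun z : ℝ × ℝ =>
      ((v ^ 2 + 2 * v * z.1 + 1 * z.1 ^ 2 + 0 * z.1 ^ 3) * Real.exp (-b * z.1 ^ 2)) *
        ((0 + B1 * z.2 + 0 * z.2 ^ 2 + 0 * z.2 ^ 3) * Real.exp (-b * z.2 ^ 2)))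
      ((volume : Measure ℝ).prod volume) :=
    (gauss_poly_integrable hb _ _ _ _).mul_prod (gauss_poly_integrable hb _ _ _ _)
  have J1 := integral_prod_mul (μ := (volume : Measure ℝ)) (ν := (volume : Measure ℝ))
    (f := fun x : ℝ => (A * v ^ 2 + (2 * A * v + B0 * v ^ 2) * x + (A + 2 * B0 * v) * x ^ 2
      + B0 * x ^ 3) * Real.exp (-b * x ^ 2))
    (g := fun y : ℝ => (1 + 0 * y + 0 * y ^ 2 + 0 * y ^ 3) * Real.exp (-b * y ^ 2))
  have J2 := integral_prod_mul (μ := (volume : Measure ℝ)) (ν := (volume : Measure ℝ))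
    (f := fun x : ℝ => (v ^ 2 + 2 * v * x + 1 * x ^ 2 + 0 * x ^ 3) * Real.exp (-b * x ^ 2))
    (g := fun y : ℝ => (0 + B1 * y + 0 * y ^ 2 + 0 * y ^ 3) * Real.exp (-b * y ^ 2))
  rw [integral_add I1 I2, J1, J2, gauss_poly hb, gauss_poly hb, gauss_poly hb, gauss_poly hb]
  linear_combination (A * v ^ 2 + (A + 2 * B0 * v) * (2 * b)⁻¹) * s2

lemma key_diag2 {b : ℝ} (hb : 0 < b) (v A B0 B1 : ℝ) :
    ∫ z : ℝ × ℝ, (z.2 + v) * (z.2 + v) * (A + B0 * z.1 + B1 * z.2) *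
        (Real.exp (-b * z.1 ^ 2) * Real.exp (-b * z.2 ^ 2))
      = (π / b) * (A * v ^ 2 + (A + 2 * B1 * v) * (2 * b)⁻¹) := by
  have s2 : Real.sqrt (π / b) * Real.sqrt (π / b) = π / b :=
    Real.mul_self_sqrt (by positivity)
  have h : (fun z : ℝ × ℝ => (z.2 + v) * (z.2 + v) * (A + B0 * z.1 + B1 * z.2) *
        (Real.exp (-b * z.1 ^ 2) * Real.exp (-b * z.2 ^ 2)))
      = fun z : ℝ × ℝ =>
        ((1 + 0 * z.1 + 0 * z.1 ^ 2 + 0 * z.1 ^ 3) * Real.exp (-b * z.1 ^ 2)) *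
          ((A * v ^ 2 + (2 * A * v + B1 * v ^ 2) * z.2 + (A + 2 * B1 * v) * z.2 ^ 2 + B1 * z.2 ^ 3) *
            Real.exp (-b * z.2 ^ 2))
        + ((0 + B0 * z.1 + 0 * z.1 ^ 2 + 0 * z.1 ^ 3) * Real.exp (-b * z.1 ^ 2)) *
          ((v ^ 2 + 2 * v * z.2 + 1 * z.2 ^ 2 + 0 * z.2 ^ 3) * Real.exp (-b * z.2 ^ 2)) := by
    funext z; ring
  rw [h, MeasureTheory.Measure.volume_eq_prod]
  have I1 : Integrable (fun z : ℝ × ℝ =>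
      ((1 + 0 * z.1 + 0 * z.1 ^ 2 + 0 * z.1 ^ 3) * Real.exp (-b * z.1 ^ 2)) *
        ((A * v ^ 2 + (2 * A * v + B1 * v ^ 2) * z.2 + (A + 2 * B1 * v) * z.2 ^ 2 + B1 * z.2 ^ 3) *
          Real.exp (-b * z.2 ^ 2)))
      ((volume : Measure ℝ).prod volume) :=
    (gauss_poly_integrable hb _ _ _ _).mul_prod (gauss_poly_integrable hb _ _ _ _)
  have I2 : Integrable (fun z : ℝ × ℝ =>
      ((0 + B0 * z.1 + 0 * z.1 ^ 2 + 0 * z.1 ^ 3) * Real.exp (-b * z.1 ^ 2)) *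
        ((v ^ 2 + 2 * v * z.2 + 1 * z.2 ^ 2 + 0 * z.2 ^ 3) * Real.exp (-b * z.2 ^ 2)))
      ((volume : Measure ℝ).prod volume) :=
    (gauss_poly_integrable hb _ _ _ _).mul_prod (gauss_poly_integrable hb _ _ _ _)
  have J1 := integral_prod_mul (μ := (volume : Measure ℝ)) (ν := (volume : Measure ℝ))
    (f := fun x : ℝ => (1 + 0 * x + 0 * x ^ 2 + 0 * x ^ 3) * Real.exp (-b * x ^ 2))
    (g := fun y : ℝ => (A * v ^ 2 + (2 * A * v + B1 * v ^ 2) * y + (A + 2 * B1 * v) * y ^ 2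
      + B1 * y ^ 3) * Real.exp (-b * y ^ 2))
  have J2 := integral_prod_mul (μ := (volume : Measure ℝ)) (ν := (volume : Measure ℝ))
    (f := fun x : ℝ => (0 + B0 * x + 0 * x ^ 2 + 0 * x ^ 3) * Real.exp (-b * x ^ 2))
    (g := fun y : ℝ => (v ^ 2 + 2 * v * y + 1 * y ^ 2 + 0 * y ^ 3) * Real.exp (-b * y ^ 2))
  rw [integral_add I1 I2, J1, J2, gauss_poly hb, gauss_poly hb, gauss_poly hb, gauss_poly hb]
  linear_combination (A * v ^ 2 + (A + 2 * B1 * v) * (2 * b)⁻¹) * s2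

open RealInnerProductSpace in
lemma key_offdiag' {b : ℝ} (hb : 0 < b) (v1 v2 A B0 B1 : ℝ) :
    ∫ z : ℝ × ℝ, (z.2 + v2) * (z.1 + v1) * (A + B0 * z.1 + B1 * z.2) *
        (Real.exp (-b * z.1 ^ 2) * Real.exp (-b * z.2 ^ 2))
      = (π / b) * (A * v1 * v2 + (B0 * v2 + B1 * v1) * (2 * b)⁻¹) := by
  rw [show (fun z : ℝ × ℝ => (z.2 + v2) * (z.1 + v1) * (A + B0 * z.1 + B1 * z.2) *
        (Real.exp (-b * z.1 ^ 2) * Real.exp (-b * z.2 ^ 2)))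
      = fun z : ℝ × ℝ => (z.1 + v1) * (z.2 + v2) * (A + B0 * z.1 + B1 * z.2) *
        (Real.exp (-b * z.1 ^ 2) * Real.exp (-b * z.2 ^ 2)) from funext fun z => by ring]
  exact key_offdiag hb v1 v2 A B0 B1

open RealInnerProductSpace in
lemma euclid_moment {m θ : ℝ} (hm : 0 < m) (hθ : 0 < θ) (C : ℝ)
    (w v : EuclideanSpace ℝ (Fin 2)) (i k : Fin 2) :
    ∫ q : EuclideanSpace ℝ (Fin 2), (q i + v i) * (q k + v k) *
        (C * (1 + ⟪w, q⟫ / (m * θ)) * Real.exp (-‖q‖ ^ 2 / (2 * m * θ)))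
      = 2 * π * m * θ * C *
        ((if i = k then m * θ else 0) + v i * v k + (w i * v k + w k * v i)) := by
  have hmθ : (0:ℝ) < m * θ := mul_pos hm hθ
  have hb : (0:ℝ) < (2 * m * θ)⁻¹ := by positivity
  have hφ : MeasurePreserving
      (⇑(MeasurableEquiv.finTwoArrow.symm.trans (MeasurableEquiv.toLp 2 (Fin 2 → ℝ))))
      (volume : Measure (ℝ × ℝ)) (volume : Measure (EuclideanSpace ℝ (Fin 2))) :=
    ((EuclideanSpace.volume_preserving_symm_measurableEquiv_toLp (Fin 2)).symm).comp
      ((volume_preserving_finTwoArrow ℝ).symm)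
  have hnorm : ∀ q : EuclideanSpace ℝ (Fin 2), ‖q‖ ^ 2 = q 0 ^ 2 + q 1 ^ 2 := by
    intro q
    rw [EuclideanSpace.norm_sq_eq]
    simp [Fin.sum_univ_two]
  have hinner : ∀ q : EuclideanSpace ℝ (Fin 2), ⟪w, q⟫ = w 0 * q 0 + w 1 * q 1 := by
    intro q
    simp [PiLp.inner_apply, RCLike.inner_apply, conj_trivial, Fin.sum_univ_two]
    ring
  have hcoord : ∀ (j : Fin 2) (z : ℝ × ℝ),
      ((MeasurableEquiv.finTwoArrow.symm.trans (MeasurableEquiv.toLp 2 (Fin 2 → ℝ))) z) j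
        = (if j = 0 then z.1 else z.2) := by
    intro j z
    fin_cases j <;>
      simp [MeasurableEquiv.trans_apply, MeasurableEquiv.coe_toLp,
        PiLp.toLp_apply]
  have he : ∀ x y : ℝ, Real.exp (-(x ^ 2 + y ^ 2) / (2 * m * θ))
      = Real.exp (-(2 * m * θ)⁻¹ * x ^ 2) * Real.exp (-(2 * m * θ)⁻¹ * y ^ 2) := by
    intro x y
    rw [← Real.exp_add]
    congr 1
    field_simp
    ring
  have hstep : (∫ q : EuclideanSpace ℝ (Fin 2), (q i + v i) * (q k + v k) *
        (C * (1 + ⟪w, q⟫ / (m * θ)) * Real.exp (-‖q‖ ^ 2 / (2 * m * θ))))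
      = ∫ z : ℝ × ℝ, ((if i = 0 then z.1 else z.2) + v i) * ((if k = 0 then z.1 else z.2) + v k) *
          (C + C * w 0 / (m * θ) * z.1 + C * w 1 / (m * θ) * z.2) *
          (Real.exp (-(2 * m * θ)⁻¹ * z.1 ^ 2) * Real.exp (-(2 * m * θ)⁻¹ * z.2 ^ 2)) := by
    rw [← MeasurePreserving.integral_comp' hφ]
    congr 1
    funext z
    have hz0 : (MeasurableEquiv.finTwoArrow.symm.trans
        (MeasurableEquiv.toLp 2 (Fin 2 → ℝ))) z 0 = z.1 := by
      simp [MeasurableEquiv.trans_apply, MeasurableEquiv.coe_toLp,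
        PiLp.toLp_apply]
    have hz1 : (MeasurableEquiv.finTwoArrow.symm.trans
        (MeasurableEquiv.toLp 2 (Fin 2 → ℝ))) z 1 = z.2 := by
      simp [MeasurableEquiv.trans_apply, MeasurableEquiv.coe_toLp,
        PiLp.toLp_apply]
    rw [hnorm, hinner, hcoord i z, hcoord k z, hz0, hz1, he]
    ring
  rw [hstep]
  fin_cases i <;> fin_cases k <;>
    (try simp only [Fin.zero_eta, Fin.mk_one, Fin.isValue, Fin.reduceEq, reduceIte])
  · rw [key_diag1 hb]
    field_simp
    ring
  · rw [key_offdiag hb]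
    field_simp
    ring
  · rw [key_offdiag' hb]
    field_simp
    ring
  · rw [key_diag2 hb]
    field_simp
    ring

/-- Let `m, θ > 0`, `n₀ ≠ 0`, `u_s ∈ ℝ²`, `J_s = n_s·u_s`, and
`w_s^{eq}(p) = (n_s/(2πmθ))·[1 + (u_s − u₀)·(p − u₀)/(mθ)]·exp(−|p − u₀|²/(2mθ))`.
Then for all `s = 0,1,2,3` and `i,k ∈ {1,2}`:
`∫ p^i p^k w_s^{eq}(p) dp = n_s·(mθ·δ_{ik} − J₀^i J₀^k/n₀²) + (J₀^i J_s^k + J_s^i J₀^k)/n₀`. -/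
theorem equilibrium_wigner_second_moments (m θ : ℝ) (hm : 0 < m) (hθ : 0 < θ)
    (n : Fin 4 → ℝ) (hn₀ : n 0 ≠ 0) (u : Fin 4 → EuclideanSpace ℝ (Fin 2))
    (J : Fin 4 → EuclideanSpace ℝ (Fin 2)) (hJ : ∀ s, J s = n s • u s)
    (weq : Fin 4 → EuclideanSpace ℝ (Fin 2) → ℝ)
    (hweq : ∀ s p, weq s p = (n s / (2 * Real.pi * m * θ)) *
        (1 + ⟪u s - u 0, p - u 0⟫ / (m * θ)) *
        Real.exp (-‖p - u 0‖ ^ 2 / (2 * m * θ))) :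
    ∀ (s : Fin 4) (i k : Fin 2),
      (∫ p : EuclideanSpace ℝ (Fin 2), p i * p k * weq s p)
        = n s * (m * θ * (if i = k then (1 : ℝ) else 0) - J 0 i * J 0 k / n 0 ^ 2)
          + (J 0 i * J s k + J s i * J 0 k) / n 0 := by
  intro s i k
  simp only [hweq]
  have htr : (∫ p : EuclideanSpace ℝ (Fin 2), p i * p k *
        ((n s / (2 * Real.pi * m * θ)) * (1 + ⟪u s - u 0, p - u 0⟫ / (m * θ)) *
          Real.exp (-‖p - u 0‖ ^ 2 / (2 * m * θ))))
      = ∫ q : EuclideanSpace ℝ (Fin 2), (q i + u 0 i) * (q k + u 0 k) *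
          ((n s / (2 * Real.pi * m * θ)) * (1 + ⟪u s - u 0, q⟫ / (m * θ)) *
            Real.exp (-‖q‖ ^ 2 / (2 * m * θ))) := by
    rw [← integral_add_right_eq_self (μ := volume)
      (fun p : EuclideanSpace ℝ (Fin 2) => p i * p k *
        ((n s / (2 * Real.pi * m * θ)) * (1 + ⟪u s - u 0, p - u 0⟫ / (m * θ)) *
          Real.exp (-‖p - u 0‖ ^ 2 / (2 * m * θ)))) (u 0)]
    congr 1
    funext q
    simp only [PiLp.add_apply, add_sub_cancel_right]
  rw [htr, euclid_moment hm hθ (n s / (2 * Real.pi * m * θ)) (u s - u 0) (u 0) i k]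
  simp only [hJ, PiLp.smul_apply, smul_eq_mul, PiLp.sub_apply]
  by_cases hik : i = k
  · simp only [hik, if_true]
    field_simp
    ring
  · simp only [hik, if_false]
    field_simp
    ring
end
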